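/- Let w be any nonnegative weighting function on pairs (s_d, s_{d-1}) (with coordinate sums d and d-1) supported only on congruent pairs and satisfying the coupling constraints with respect to the conditional distributions of S given D=d and D=d-1. Then for every coordinate k, E[S_k | D=d] − E[S_k | D=d-1] = ∑ w(s_d, s_{d-1}) · (s_{d,k} − s_{d-1,k}) ≥ 0. -/

import Mathlib

open Finset

/- Probability of an event, conditional probability `P(A|B)`, and conditional
expectation `E[Y|A]` under a mass function `p` on a finite sample space. -/

open Classical in
noncomputable def Pr {Ω : Type*} [Fintype Ω] (p : Ω → ℝ) (A : Ω → Prop) : ℝ :=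
  ∑ ω, if A ω then p ω else 0

noncomputable def cPr {Ω : Type*} [Fintype Ω] (p : Ω → ℝ) (A B : Ω → Prop) : ℝ :=
  Pr p (fun ω => A ω ∧ B ω) / Pr p B

open Classical in
noncomputable def cexp {Ω : Type*} [Fintype Ω] (p : Ω → ℝ) (Y : Ω → ℝ) (A : Ω → Prop) : ℝ :=
  (∑ ω, if A ω then p ω * Y ω else 0) / Pr p A


open Classical in
lemma cexp_eq_sum_cPr {Ω : Type*} [Fintype Ω] {K : ℕ}
    (p : Ω → ℝ) (S : Ω → Fin K → ℕ) (D : Ω → ℕ) (hD : ∀ ω, D ω = ∑ i, S ω i)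
    (d : ℕ) (k : Fin K) :
    cexp p (fun ω => (S ω k : ℝ)) (fun ω => D ω = d)
      = ∑ s ∈ (univ.image S).filter (fun s => ∑ i, s i = d),
          cPr p (fun ω => S ω = s) (fun ω => D ω = d) * (s k : ℝ) := by
  unfold cexp cPr Pr
  simp only [div_mul_eq_mul_div]
  rw [← Finset.sum_div]
  congr 1
  symm
  trans (∑ ω, ∑ s ∈ (univ.image S).filter (fun s => ∑ i, s i = d),
      if S ω = s ∧ D ω = d then p ω * (s k : ℝ) else 0)
  · rw [Finset.sum_comm]
    refine Finset.sum_congr rfl fun s _ => ?_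
    rw [Finset.sum_mul]
    refine Finset.sum_congr rfl fun ω _ => ?_
    split <;> simp
  refine Finset.sum_congr rfl fun ω _ => ?_
  by_cases h : D ω = d
  · rw [if_pos h]
    rw [Finset.sum_eq_single (S ω)]
    · simp [h]
    · intro s hs hne
      rw [if_neg]
      rintro ⟨h1, _⟩
      exact hne h1.symm
    · intro habs
      exact absurd (Finset.mem_filter.mpr ⟨Finset.mem_image_of_mem S (Finset.mem_univ ω), by rw [← hD ω, h]⟩) habs
  · rw [if_neg h]
    refine Finset.sum_eq_zero fun s _ => ?_
    rw [if_neg]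
    rintro ⟨_, h2⟩
    exact h h2

/-- A nonnegative weighting function supported only on congruent pairs and satisfying
the coupling constraints represents the difference of conditional sub-treatment means
as a nonnegative weighted sum: for every coordinate `k`,
`E[S_k|D=d] − E[S_k|D=d-1] = ∑ w(s_d,s_{d-1})·(s_{d,k} − s_{d-1,k}) ≥ 0`. -/
theorem congruent_coupling_implies_nondecreasing_means
    {Ω : Type*} [Fintype Ω] (K : ℕ)
    (p : Ω → ℝ) (hp0 : ∀ ω, 0 ≤ p ω) (hp1 : ∑ ω, p ω = 1)
    (S : Ω → Fin K → ℕ) (D : Ω → ℕ) (hD : ∀ ω, D ω = ∑ i, S ω i)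
    (d : ℕ) (hd : 1 ≤ d)
    (hPd : 0 < Pr p (fun ω => D ω = d)) (hPd1 : 0 < Pr p (fun ω => D ω = d - 1))
    (w : (Fin K → ℕ) → (Fin K → ℕ) → ℝ)
    (hw0 : ∀ s s', 0 ≤ w s s')
    (hcong : ∀ s s' : Fin K → ℕ, (∑ i, s i = d) → (∑ i, s' i = d - 1) →
      (∀ j : Fin K, s ≠ s' + Pi.single j 1) → w s s' = 0)
    (hw1 : ∀ s' : Fin K → ℕ, (∑ i, s' i = d - 1) →
      ∑ s ∈ (univ.image S).filter (fun s => ∑ i, s i = d), w s s'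
        = cPr p (fun ω => S ω = s') (fun ω => D ω = d - 1))
    (hw2 : ∀ s : Fin K → ℕ, (∑ i, s i = d) →
      ∑ s' ∈ (univ.image S).filter (fun s' => ∑ i, s' i = d - 1), w s s'
        = cPr p (fun ω => S ω = s) (fun ω => D ω = d)) :
    ∀ k : Fin K,
      cexp p (fun ω => (S ω k : ℝ)) (fun ω => D ω = d)
          - cexp p (fun ω => (S ω k : ℝ)) (fun ω => D ω = d - 1)
        = ∑ s ∈ (univ.image S).filter (fun s => ∑ i, s i = d),
            ∑ s' ∈ (univ.image S).filter (fun s' => ∑ i, s' i = d - 1),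
              w s s' * ((s k : ℝ) - (s' k : ℝ)) ∧
      0 ≤ ∑ s ∈ (univ.image S).filter (fun s => ∑ i, s i = d),
            ∑ s' ∈ (univ.image S).filter (fun s' => ∑ i, s' i = d - 1),
              w s s' * ((s k : ℝ) - (s' k : ℝ)) := by
  intro k
  set Ad := (univ.image S).filter (fun s => ∑ i, s i = d) with hAd
  set Ad1 := (univ.image S).filter (fun s' => ∑ i, s' i = d - 1) with hAd1
  have key : cexp p (fun ω => (S ω k : ℝ)) (fun ω => D ω = d)
          - cexp p (fun ω => (S ω k : ℝ)) (fun ω => D ω = d - 1)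
        = ∑ s ∈ Ad, ∑ s' ∈ Ad1, w s s' * ((s k : ℝ) - (s' k : ℝ)) := by
    rw [cexp_eq_sum_cPr p S D hD d k, cexp_eq_sum_cPr p S D hD (d-1) k]
    have h1 : ∑ s ∈ Ad, cPr p (fun ω => S ω = s) (fun ω => D ω = d) * (s k : ℝ)
        = ∑ s ∈ Ad, ∑ s' ∈ Ad1, w s s' * (s k : ℝ) := by
      refine Finset.sum_congr rfl fun s hs => ?_
      rw [← hw2 s (Finset.mem_filter.mp hs).2, Finset.sum_mul]
    have h2 : ∑ s' ∈ Ad1, cPr p (fun ω => S ω = s') (fun ω => D ω = d - 1) * (s' k : ℝ)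
        = ∑ s ∈ Ad, ∑ s' ∈ Ad1, w s s' * (s' k : ℝ) := by
      rw [Finset.sum_comm]
      refine Finset.sum_congr rfl fun s' hs' => ?_
      rw [← hw1 s' (Finset.mem_filter.mp hs').2, Finset.sum_mul]
    rw [h1, h2, ← Finset.sum_sub_distrib]
    refine Finset.sum_congr rfl fun s _ => ?_
    rw [← Finset.sum_sub_distrib]
    refine Finset.sum_congr rfl fun s' _ => ?_
    ring
  refine ⟨key, ?_⟩
  refine Finset.sum_nonneg fun s hs => Finset.sum_nonneg fun s' hs' => ?_
  by_cases h : ∀ j : Fin K, s ≠ s' + Pi.single j 1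
  · rw [hcong s s' (Finset.mem_filter.mp hs).2 (Finset.mem_filter.mp hs').2 h, zero_mul]
  · push_neg at h
    obtain ⟨j, hj⟩ := h
    refine mul_nonneg (hw0 s s') ?_
    have : (s' k : ℝ) ≤ (s k : ℝ) := by
      rw [hj]
      simp only [Pi.add_apply]
      exact_mod_cast Nat.le_add_right _ _
    linarith
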